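/- arXiv:1708.02095 — 3 statements merged into one kernel-verified Lean document; each statement's English description precedes it below -/
import Mathlib

section
/- For every p ≥ 3/2, the function f_p : [0,∞) → [0,∞) defined implicitly by f_p((1+s)log(1+s)) = s^p for s ≥ 0 (and f_p(0) = 0) is well-defined, nondecreasing and convex. -/
open Real Set Filter

noncomputable def xiT : ℝ → ℝ := fun s => if s ≤ 0 then s else (1 + s) * Real.log (1 + s)

lemma xiT_of_nonneg {s : ℝ} (hs : 0 ≤ s) : xiT s = (1 + s) * Real.log (1 + s) := by
  rcases eq_or_lt_of_le hs with h | h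
  · simp [xiT, ← h]
  · simp [xiT, not_le.2 h]

lemma xi_hasDerivAt {s : ℝ} (hs : 0 < s) :
    HasDerivAt (fun t => (1 + t) * Real.log (1 + t)) (1 + Real.log (1 + s)) s := by
  have h1 : HasDerivAt (fun t : ℝ => 1 + t) 1 s := (hasDerivAt_id s).const_add 1
  have hne : (1 : ℝ) + s ≠ 0 := by positivity
  have h2 : HasDerivAt (fun t : ℝ => Real.log (1 + t)) (1 * (1 + s)⁻¹) s := by
    simpa [Function.comp_def] using (Real.hasDerivAt_log hne).comp s h1
  have := h1.mul h2
  refine this.congr_deriv ?_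
  field_simp
  ring

lemma xi_continuous : Continuous (fun t : ℝ => (1 + t) * Real.log (1 + t)) := by
  have : Continuous fun t : ℝ => (1 + t) * Real.log (1 + t) :=
    Real.continuous_mul_log.comp (by continuity)
  exact this

lemma xi_nonneg {s : ℝ} (hs : 0 ≤ s) : 0 ≤ (1 + s) * Real.log (1 + s) := by
  have := Real.log_nonneg (by linarith : (1:ℝ) ≤ 1 + s)
  positivity

lemma xi_strictMonoOn : StrictMonoOn (fun t : ℝ => (1 + t) * Real.log (1 + t)) (Set.Ici 0) := by
  apply strictMonoOn_of_deriv_pos (convex_Ici 0) (xi_continuous.continuousOn)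
  intro x hx
  rw [interior_Ici] at hx
  rw [(xi_hasDerivAt hx).deriv]
  have hx' : (0:ℝ) < x := hx
  have := Real.log_nonneg (by linarith : (1:ℝ) ≤ 1 + x)
  linarith

lemma xiT_strictMono : StrictMono xiT := by
  intro a b hab
  rcases le_or_gt a 0 with ha | ha
  · rcases le_or_gt b 0 with hb | hb
    · simpa [xiT, ha, hb] using hab
    · have hb' : xiT b = (1 + b) * Real.log (1 + b) := xiT_of_nonneg hb.le
      have : (0:ℝ) < xiT b ∨ 0 ≤ xiT b := Or.inr (hb' ▸ xi_nonneg hb.le)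
      rcases lt_or_ge a 0 with ha2 | ha2
      · have : xiT a = a := by simp [xiT, ha]
        rw [this, hb']
        exact lt_of_lt_of_le ha2 (xi_nonneg hb.le)
      · have ha0 : a = 0 := le_antisymm ha ha2
        subst ha0
        have := xi_strictMonoOn (le_refl (0:ℝ)) hb.le hab
        simpa [xiT_of_nonneg, hb.le] using this
  · rw [xiT_of_nonneg ha.le, xiT_of_nonneg (ha.trans hab).le]
    exact xi_strictMonoOn ha.le (ha.trans hab).le hab

lemma xiT_continuous : Continuous xiT := by
  apply Continuous.if_le continuous_id xi_continuous continuous_id continuous_const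
  intro x hx
  simp only [id] at hx
  subst hx
  simp

lemma xiT_surjective : Function.Surjective xiT := by
  intro y
  rcases le_or_gt y 0 with hy | hy
  · exact ⟨y, by simp [xiT, hy]⟩
  · have h0 : xiT 0 = 0 := by simp [xiT]
    have hb : (0:ℝ) ≤ Real.exp y - 1 := by
      have := Real.one_le_exp hy.le; linarith
    have hxb : xiT (Real.exp y - 1) = Real.exp y * y := by
      rw [xiT_of_nonneg hb]
      have : (1:ℝ) + (Real.exp y - 1) = Real.exp y := by ring
      rw [this, Real.log_exp]
    have hmem : y ∈ Set.Icc (xiT 0) (xiT (Real.exp y - 1)) := by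
      constructor
      · rw [h0]; exact hy.le
      · rw [hxb]
        nlinarith [Real.one_le_exp hy.le, hy.le]
    have := intermediate_value_Icc (by linarith : (0:ℝ) ≤ Real.exp y - 1)
      (xiT_continuous.continuousOn)
    obtain ⟨s, _, hs⟩ := this hmem
    exact ⟨s, hs⟩

noncomputable def gInv : ℝ → ℝ :=
  (StrictMono.orderIsoOfSurjective xiT xiT_strictMono xiT_surjective).symm

lemma gInv_xiT (s : ℝ) : gInv (xiT s) = s :=
  StrictMono.orderIsoOfSurjective_symm_apply_self _ _ _ s

lemma xiT_gInv (y : ℝ) : xiT (gInv y) = y :=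
  StrictMono.orderIsoOfSurjective_self_symm_apply _ _ _ y

lemma gInv_monotone : Monotone gInv := (OrderIso.monotone _)

lemma gInv_strictMono : StrictMono gInv := (OrderIso.strictMono _)

lemma gInv_continuous : Continuous gInv := (OrderIso.continuous _)

lemma gInv_zero : gInv 0 = 0 := by
  have h0 : xiT 0 = 0 := by simp [xiT]
  conv_lhs => rw [← h0]
  exact gInv_xiT 0

lemma gInv_nonneg {y : ℝ} (hy : 0 ≤ y) : 0 ≤ gInv y := by
  rw [← gInv_zero]; exact gInv_monotone hy

lemma gInv_pos {y : ℝ} (hy : 0 < y) : 0 < gInv y := by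
  rw [← gInv_zero]; exact gInv_strictMono hy

/-- key inequality -/
lemma key_ineq {p s : ℝ} (hp : 3 / 2 ≤ p) (hs : 0 ≤ s) :
    s ≤ (p - 1) * ((1 + s) * (1 + Real.log (1 + s))) := by
  have h1s : (0:ℝ) < 1 + s := by linarith
  have hlog : 1 - (1 + s)⁻¹ ≤ Real.log (1 + s) := by
    have := Real.log_le_sub_one_of_pos (show (0:ℝ) < (1+s)⁻¹ by positivity)
    rw [Real.log_inv] at this
    have h2 : (1+s)⁻¹ - 1 + Real.log (1+s) ≥ 0 := by linarith
    linarith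
  have hkey : 2 * s ≤ (1 + s) * (1 + Real.log (1 + s)) := by
    have : (1 + s) * (1 + (1 - (1+s)⁻¹)) ≤ (1 + s) * (1 + Real.log (1 + s)) := by
      apply mul_le_mul_of_nonneg_left _ h1s.le
      linarith
    have heq : (1 + s) * (1 + (1 - (1+s)⁻¹)) = 2 * s + 1 := by
      field_simp; ring
    linarith
  have hw : (0:ℝ) ≤ (1 + s) * (1 + Real.log (1 + s)) := by
    have := Real.log_nonneg (by linarith : (1:ℝ) ≤ 1 + s)
    positivity
  nlinarith

noncomputable def hFun (p : ℝ) : ℝ → ℝ :=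
  fun s => p * s ^ (p - 1) * (1 + Real.log (1 + s))⁻¹

lemma w_pos {s : ℝ} (hs : 0 ≤ s) : 0 < 1 + Real.log (1 + s) := by
  have := Real.log_nonneg (by linarith : (1:ℝ) ≤ 1 + s)
  linarith

lemma hFun_hasDerivAt {p s : ℝ} (hp : 3 / 2 ≤ p) (hs : 0 < s) :
    HasDerivAt (hFun p)
      (p * ((p - 1) * s ^ (p - 2)) * (1 + Real.log (1 + s))⁻¹
        + p * s ^ (p - 1) * (-((1 + s)⁻¹) / (1 + Real.log (1 + s)) ^ 2)) s := by
  have h1s : (0:ℝ) < 1 + s := by linarith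
  have hr : HasDerivAt (fun t : ℝ => t ^ (p - 1)) ((p - 1) * s ^ (p - 1 - 1)) s :=
    Real.hasDerivAt_rpow_const (Or.inl hs.ne')
  have hr' : HasDerivAt (fun t : ℝ => p * t ^ (p - 1)) (p * ((p - 1) * s ^ (p - 2))) s := by
    have := hr.const_mul p
    refine this.congr_deriv ?_
    ring_nf
  have hw : HasDerivAt (fun t : ℝ => 1 + Real.log (1 + t)) (1 * (1 + s)⁻¹) s := by
    have h1 : HasDerivAt (fun t : ℝ => 1 + t) 1 s := (hasDerivAt_id s).const_add 1
    simpa using ((Real.hasDerivAt_log h1s.ne').comp s h1).const_add 1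
  have hwne : (1 + Real.log (1 + s)) ≠ 0 := (w_pos hs.le).ne'
  have hinv : HasDerivAt (fun t : ℝ => (1 + Real.log (1 + t))⁻¹)
      (-(1 * (1 + s)⁻¹) / (1 + Real.log (1 + s)) ^ 2) s := hw.inv hwne
  have := hr'.mul hinv
  refine this.congr_deriv ?_
  ring

lemma hFun_deriv_nonneg {p s : ℝ} (hp : 3 / 2 ≤ p) (hs : 0 < s) :
    0 ≤ p * ((p - 1) * s ^ (p - 2)) * (1 + Real.log (1 + s))⁻¹
        + p * s ^ (p - 1) * (-((1 + s)⁻¹) / (1 + Real.log (1 + s)) ^ 2) := by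
  have h1s : (0:ℝ) < 1 + s := by linarith
  have hw : (0:ℝ) < 1 + Real.log (1 + s) := w_pos hs.le
  have hr2 : (0:ℝ) < s ^ (p - 2) := Real.rpow_pos_of_pos hs _
  have hsplit : s ^ (p - 1) = s ^ (p - 2) * s := by
    rw [← Real.rpow_add_one hs.ne' (p-2)]
    norm_num
    ring_nf
  have hkey := key_ineq hp hs.le
  have hp0 : (0:ℝ) < p := by linarith
  rw [hsplit]
  rw [← sub_nonneg]
  have expand : p * ((p - 1) * s ^ (p - 2)) * (1 + Real.log (1 + s))⁻¹
      + p * (s ^ (p - 2) * s) * (-((1 + s)⁻¹) / (1 + Real.log (1 + s)) ^ 2) - 0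
      = p * s ^ (p - 2) * ((p - 1) * ((1 + s) * (1 + Real.log (1 + s))) - s)
        / ((1 + s) * (1 + Real.log (1 + s)) ^ 2) := by
    field_simp
    ring
  rw [expand]
  apply div_nonneg _ (by positivity)
  have : 0 ≤ (p - 1) * ((1 + s) * (1 + Real.log (1 + s))) - s := by linarith
  positivity

lemma hFun_monotoneOn {p : ℝ} (hp : 3 / 2 ≤ p) : MonotoneOn (hFun p) (Set.Ici 0) := by
  apply monotoneOn_of_deriv_nonneg (convex_Ici 0)
  · -- continuity on Ici 0
    intro x hx
    have hx0 : (0:ℝ) ≤ x := hx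
    apply ContinuousAt.continuousWithinAt
    have h1 : ContinuousAt (fun t : ℝ => t ^ (p - 1)) x :=
      Real.continuousAt_rpow_const x (p - 1) (Or.inr (by linarith))
    have h2 : ContinuousAt (fun t : ℝ => (1 + Real.log (1 + t))⁻¹) x := by
      apply ContinuousAt.inv₀
      · exact (continuousAt_const.add ((Real.continuousAt_log (by linarith : (1:ℝ)+x ≠ 0)).comp
          (continuousAt_const.add continuousAt_id)))
      · exact (w_pos hx0).ne'
    exact ((h1.const_mul p).mul h2)
  · intro x hx
    rw [interior_Ici] at hx
    exact ((hFun_hasDerivAt hp hx).differentiableAt).differentiableWithinAt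
  · intro x hx
    rw [interior_Ici] at hx
    rw [(hFun_hasDerivAt hp hx).deriv]
    exact hFun_deriv_nonneg hp hx

lemma f_hasDerivAt {p x : ℝ} (hp : 3 / 2 ≤ p) (hx : 0 < x) :
    HasDerivAt (fun y => gInv y ^ p) (hFun p (gInv x)) x := by
  have hs : 0 < gInv x := gInv_pos hx
  have hxi : HasDerivAt xiT (1 + Real.log (1 + gInv x)) (gInv x) := by
    apply (xi_hasDerivAt hs).congr_of_eventuallyEq
    filter_upwards [Ioi_mem_nhds hs] with t ht
    exact xiT_of_nonneg (le_of_lt ht)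
  have hne : (1 + Real.log (1 + gInv x)) ≠ 0 := (w_pos hs.le).ne'
  have hgx : HasDerivAt gInv (1 + Real.log (1 + gInv x))⁻¹ x :=
    HasDerivAt.of_local_left_inverse gInv_continuous.continuousAt hxi hne
      (Filter.Eventually.of_forall xiT_gInv)
  have hrp : HasDerivAt (fun t : ℝ => t ^ p) (p * (gInv x) ^ (p - 1)) (gInv x) :=
    Real.hasDerivAt_rpow_const (Or.inl hs.ne')
  have := hrp.comp x hgx
  exact this

theorem f_p_well_defined_monotone_convex (p : ℝ) (hp : 3 / 2 ≤ p) :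
    ∃ f : ℝ → ℝ,
      (∀ s : ℝ, 0 ≤ s → f ((1 + s) * Real.log (1 + s)) = s ^ p) ∧
      f 0 = 0 ∧
      MonotoneOn f (Set.Ici 0) ∧
      ConvexOn ℝ (Set.Ici 0) f := by
  have hp0 : (0:ℝ) < p := by linarith
  refine ⟨fun y => gInv y ^ p, ?_, ?_, ?_, ?_⟩
  · intro s hs
    simp only
    rw [← xiT_of_nonneg hs, gInv_xiT]
  · simp only
    rw [gInv_zero, Real.zero_rpow hp0.ne']
  · intro x hx y hy hxy
    exact Real.rpow_le_rpow (gInv_nonneg hx) (gInv_monotone hxy) hp0.le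
  · apply MonotoneOn.convexOn_of_deriv (convex_Ici 0)
    · intro x hx
      apply ContinuousAt.continuousWithinAt
      exact (Real.continuousAt_rpow_const (gInv x) p (Or.inr hp0.le)).comp
        gInv_continuous.continuousAt
    · intro x hx
      rw [interior_Ici] at hx
      exact (f_hasDerivAt hp hx).differentiableAt.differentiableWithinAt
    · intro x hx y hy hxy
      rw [interior_Ici] at hx hy
      rw [(f_hasDerivAt hp hx).deriv, (f_hasDerivAt hp hy).deriv]
      exact hFun_monotoneOn hp (gInv_nonneg hx.le) (gInv_nonneg hy.le) (gInv_monotone hxy)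
end

section
/- For all p ≥ 3/2 and all s ≥ 0, (p−1)(1+s)(1+log(1+s))² − s ≥ 0. -/
theorem convexity_key_inequality (p s : ℝ) (hp : 3 / 2 ≤ p) (hs : 0 ≤ s) :
    0 ≤ (p - 1) * (1 + s) * (1 + Real.log (1 + s)) ^ 2 - s := by
  have h1 : (0:ℝ) < 1 + s := by linarith
  have hL : 0 ≤ Real.log (1 + s) := Real.log_nonneg (by linarith)
  have h2 : 1 - (1 + s)⁻¹ ≤ Real.log (1 + s) := Real.one_sub_inv_le_log_of_pos h1
  have h3 : s ≤ (1 + s) * Real.log (1 + s) := by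
    have := mul_le_mul_of_nonneg_left h2 (le_of_lt h1)
    rw [mul_sub, mul_inv_cancel₀ (ne_of_gt h1)] at this
    linarith
  nlinarith [sq_nonneg (Real.log (1 + s)), mul_nonneg (le_of_lt h1) (sq_nonneg (Real.log (1 + s))), mul_nonneg hs hL]
end

section
/- For every λ > 0 and ρ > 0, the integral ∫_{|y|<ρ} f₃(λ/|y|) dy over ℝ³ is finite, where f₃ : [0,∞) → [0,∞) is defined by f₃((1+s)log(1+s)) = s³. -/
open MeasureTheory Set Filter Topology MeasureTheory.Measure


noncomputable def Saux : ℝ → ℝ :=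
  fun t => sSup {s : ℝ | 0 ≤ s ∧ (1 + s) * Real.log (1 + s) ≤ t}

lemma g_ge_self {s : ℝ} (hs : 0 ≤ s) : s ≤ (1 + s) * Real.log (1 + s) := by
  have h1 : (0:ℝ) < 1 + s := by linarith
  have h2 := Real.log_le_sub_one_of_pos (inv_pos.2 h1)
  rw [Real.log_inv] at h2
  have h3 : (1 + s) * (1 + s)⁻¹ = 1 := mul_inv_cancel₀ h1.ne'
  nlinarith [h2, h1]

lemma g_strictMono {a b : ℝ} (ha : 0 ≤ a) (hab : a < b) :
    (1 + a) * Real.log (1 + a) < (1 + b) * Real.log (1 + b) := by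
  have hl := Real.log_lt_log (by linarith : (0:ℝ) < 1 + a) (by linarith : 1 + a < 1 + b)
  have hl0 : 0 ≤ Real.log (1 + a) := Real.log_nonneg (by linarith)
  nlinarith

lemma Saux_spec {t : ℝ} (ht : 0 ≤ t) :
    0 ≤ Saux t ∧ (1 + Saux t) * Real.log (1 + Saux t) = t := by
  have hcont : ContinuousOn (fun s : ℝ => (1 + s) * Real.log (1 + s)) (Icc 0 t) := by
    apply ContinuousOn.mul (by fun_prop)
    apply Real.continuousOn_log.comp (by fun_prop)
    intro x hx
    simp only [mem_compl_iff, mem_singleton_iff]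
    intro h
    have : (0:ℝ) ≤ x := hx.1
    linarith
  have hmem : t ∈ Icc ((1 + (0:ℝ)) * Real.log (1 + 0)) ((1 + t) * Real.log (1 + t)) := by
    constructor
    · simpa using ht
    · exact g_ge_self ht
  obtain ⟨s, hsmem, hs0⟩ := intermediate_value_Icc ht hcont hmem
  have hs : (1 + s) * Real.log (1 + s) = t := hs0
  have hub : ∀ a ∈ {s : ℝ | 0 ≤ s ∧ (1 + s) * Real.log (1 + s) ≤ t}, a ≤ s := by
    intro a ha
    by_contra h
    push_neg at h
    have := g_strictMono hsmem.1 h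
    rw [hs] at this
    exact absurd ha.2 (by linarith)
  have hmemA : s ∈ {s : ℝ | 0 ≤ s ∧ (1 + s) * Real.log (1 + s) ≤ t} := ⟨hsmem.1, hs.le⟩
  have hS : Saux t = s := le_antisymm (csSup_le ⟨s, hmemA⟩ hub) (le_csSup ⟨s, hub⟩ hmemA)
  rw [hS]
  exact ⟨hsmem.1, hs⟩

lemma Saux_nonneg (t : ℝ) : 0 ≤ Saux t := by
  rcases le_or_gt 0 t with ht | ht
  · exact (Saux_spec ht).1
  · have he : {s : ℝ | 0 ≤ s ∧ (1 + s) * Real.log (1 + s) ≤ t} = ∅ := by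
      ext s
      simp only [mem_setOf_eq, mem_empty_iff_false, iff_false, not_and, not_le]
      intro hs
      calc t < 0 := ht
        _ ≤ s := hs
        _ ≤ _ := g_ge_self hs
    rw [Saux, he, Real.sSup_empty]

lemma Saux_mono : Monotone Saux := by
  intro t₁ t₂ h
  rcases eq_empty_or_nonempty {s : ℝ | 0 ≤ s ∧ (1 + s) * Real.log (1 + s) ≤ t₁} with he | hne
  · rw [Saux, he, Real.sSup_empty]; exact Saux_nonneg t₂
  · refine csSup_le_csSup ?_ hne ?_
    · exact ⟨max t₂ 0, fun a ha => le_max_of_le_left (le_trans (g_ge_self ha.1) ha.2)⟩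
    · intro a ha; exact ⟨ha.1, ha.2.trans h⟩

lemma Saux_le_self {t : ℝ} (ht : 0 ≤ t) : Saux t ≤ t := by
  obtain ⟨h1, h2⟩ := Saux_spec ht
  calc Saux t ≤ (1 + Saux t) * Real.log (1 + Saux t) := g_ge_self h1
    _ = t := h2

lemma Saux_log_le {t : ℝ} (ht : Real.exp 1 ≤ t) : Saux t * Real.log t ≤ 2 * t := by
  have ht0 : (0:ℝ) < t := lt_of_lt_of_le (Real.exp_pos 1) ht
  obtain ⟨hs0, hg⟩ := Saux_spec ht0.le
  set s := Saux t with hsdef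
  have hlt : 1 ≤ Real.log t := by
    rw [← Real.log_exp 1]
    exact Real.log_le_log (Real.exp_pos 1) ht
  have h1s : (0:ℝ) < 1 + s := by linarith
  have hl0 : 0 ≤ Real.log (1 + s) := Real.log_nonneg (by linarith)
  have hsq : Real.sqrt t ≤ 1 + s := by
    by_contra h
    push_neg at h
    have hlog1 : Real.log (1 + s) ≤ Real.log (Real.sqrt t) := Real.log_le_log h1s h.le
    have hlogsqrt : Real.log (Real.sqrt t) = Real.log t / 2 := Real.log_sqrt ht0.le
    have hx : Real.log (Real.sqrt t) < Real.sqrt t := by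
      have := Real.log_le_sub_one_of_pos (Real.sqrt_pos.2 ht0)
      linarith
    have hms : Real.sqrt t * Real.sqrt t = t := Real.mul_self_sqrt ht0.le
    have hlpos : 0 < Real.log (Real.sqrt t) := by rw [hlogsqrt]; linarith
    have e1 : (1 + s) * Real.log (1 + s) ≤ (1 + s) * Real.log (Real.sqrt t) :=
      mul_le_mul_of_nonneg_left hlog1 h1s.le
    have e2 : (1 + s) * Real.log (Real.sqrt t) < Real.sqrt t * Real.log (Real.sqrt t) :=
      mul_lt_mul_of_pos_right h hlpos
    have e3 : Real.sqrt t * Real.log (Real.sqrt t) < Real.sqrt t * Real.sqrt t :=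
      mul_lt_mul_of_pos_left hx (Real.sqrt_pos.2 ht0)
    linarith [hg, hms]
  have h2 : Real.log t / 2 ≤ Real.log (1 + s) := by
    rw [← Real.log_sqrt ht0.le]
    exact Real.log_le_log (Real.sqrt_pos.2 ht0) hsq
  nlinarith [mul_le_mul_of_nonneg_left h2 hs0, hl0, hg]


lemma lintegral_fun_norm_aux (f : ℝ → ENNReal) (hf : Measurable f) :
    ∫⁻ x : EuclideanSpace ℝ (Fin 3), f ‖x‖ =
      (volume : Measure (EuclideanSpace ℝ (Fin 3))).toSphere univ *
        ∫⁻ y in Ioi (0:ℝ), ENNReal.ofReal (y ^ 2) * f y := by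
  set E := EuclideanSpace ℝ (Fin 3)
  set μ : Measure E := volume
  have hdim : Module.finrank ℝ E - 1 = 2 := by
    simp [E, finrank_euclideanSpace_fin]
  have hfm : Measurable fun p : Metric.sphere (0:E) 1 × Ioi (0:ℝ) => f p.2 :=
    hf.comp (measurable_subtype_coe.comp measurable_snd)
  calc
    ∫⁻ x : E, f ‖x‖ = ∫⁻ x in ({0}ᶜ : Set E), f ‖x‖ ∂μ := by
      rw [restrict_compl_singleton]
    _ = ∫⁻ x : ({0}ᶜ : Set E), f ‖(x : E)‖ ∂(μ.comap (↑)) :=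
      (lintegral_subtype_comap (measurableSet_singleton 0).compl _).symm
    _ = ∫⁻ p : Metric.sphere (0:E) 1 × Ioi (0:ℝ), f p.2
          ∂(μ.toSphere.prod (volumeIoiPow (Module.finrank ℝ E - 1))) := by
      rw [← (measurePreserving_homeomorphUnitSphereProd μ).lintegral_comp hfm]
      simp only [homeomorphUnitSphereProd_apply_snd_coe]
    _ = μ.toSphere univ * ∫⁻ r : Ioi (0:ℝ), f r ∂(volumeIoiPow 2) := by
      rw [hdim, lintegral_prod _ hfm.aemeasurable]
      simp only [lintegral_const]
      rw [mul_comm]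
    _ = μ.toSphere univ * ∫⁻ y in Ioi (0:ℝ), ENNReal.ofReal (y ^ 2) * f y := by
      congr 1
      rw [Measure.volumeIoiPow,
        lintegral_withDensity_eq_lintegral_mul _
          (show Measurable fun r : Ioi (0:ℝ) => ENNReal.ofReal ((r:ℝ) ^ 2) from
            ENNReal.measurable_ofReal.comp (measurable_subtype_coe.pow_const 2))
          (show Measurable fun r : Ioi (0:ℝ) => f r from hf.comp measurable_subtype_coe)]
      simp only [Pi.mul_apply]
      exact lintegral_subtype_comap measurableSet_Ioi
        (fun y => ENNReal.ofReal (y ^ 2) * f y)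


lemma integrable_H (lam ρ : ℝ) (hlam : 0 < lam) (hρ : 0 < ρ) :
    IntegrableOn (fun y : ℝ => (y * max 1 (Real.log (lam / y)) ^ 3)⁻¹) (Ioo 0 ρ) := by
  set m : ℝ := min ρ (lam / Real.exp 1) with hm
  have hm0 : 0 < m := lt_min hρ (div_pos hlam (Real.exp_pos 1))
  have hml : m ≤ lam / Real.exp 1 := min_le_right _ _
  have claimA : ∀ y : ℝ, 0 < y → y ≤ m → 1 ≤ Real.log lam - Real.log y := by
    intro y hy0 hym
    have h1 : Real.log y ≤ Real.log (lam / Real.exp 1) :=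
      Real.log_le_log hy0 (hym.trans hml)
    rw [Real.log_div hlam.ne' (Real.exp_ne_zero 1), Real.log_exp] at h1
    linarith
  -- piece 2 : Icc m ρ
  have hpiece2 : IntegrableOn (fun y : ℝ => (y * max 1 (Real.log (lam / y)) ^ 3)⁻¹) (Icc m ρ) := by
    apply ContinuousOn.integrableOn_Icc
    have c1 : ContinuousOn (fun y : ℝ => Real.log (lam / y)) (Icc m ρ) := by
      apply Real.continuousOn_log.comp
        (continuousOn_const.div continuousOn_id
          (fun y hy => (lt_of_lt_of_le hm0 hy.1).ne'))
      intro y hy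
      simp only [mem_compl_iff, mem_singleton_iff]
      exact div_ne_zero hlam.ne' (lt_of_lt_of_le hm0 hy.1).ne'
    have c2 : ContinuousOn (fun y : ℝ => max 1 (Real.log (lam / y))) (Icc m ρ) :=
      (continuous_const.max continuous_id).comp_continuousOn c1
    apply ContinuousOn.inv₀ (continuousOn_id.mul (c2.pow 3))
    · intro y hy
      have hy0 : 0 < y := lt_of_lt_of_le hm0 hy.1
      have : (0:ℝ) < max 1 (Real.log (lam / y)) := lt_of_lt_of_le one_pos (le_max_left _ _)
      exact (mul_pos hy0 (pow_pos this 3)).ne'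
  -- piece 1 : Ioo 0 m via antiderivative
  have hpiece1 : IntegrableOn (fun y : ℝ => (y * max 1 (Real.log (lam / y)) ^ 3)⁻¹) (Ioo 0 m) := by
    have hderiv : ∀ y ∈ Ioo (0:ℝ) m,
        HasDerivAt (fun x => if x ≤ 0 then (0:ℝ) else ((Real.log lam - Real.log x) ^ 2)⁻¹ / 2)
          ((y * (Real.log lam - Real.log y) ^ 3)⁻¹) y := by
      intro y hy
      have hy0 : 0 < y := hy.1
      have hu1 : 1 ≤ Real.log lam - Real.log y := claimA y hy0 hy.2.le
      have hu0 : Real.log lam - Real.log y ≠ 0 := by linarith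
      have h1 : HasDerivAt (fun x => Real.log lam - Real.log x) (0 - y⁻¹) y :=
        (hasDerivAt_const y (Real.log lam)).sub (Real.hasDerivAt_log hy0.ne')
      have h2 := ((h1.pow 2).inv (pow_ne_zero 2 hu0)).div_const 2
      have heq : (fun x => if x ≤ 0 then (0:ℝ) else ((Real.log lam - Real.log x) ^ 2)⁻¹ / 2)
          =ᶠ[𝓝 y] fun x => (((Real.log lam - Real.log x) ^ 2)⁻¹) / 2 := by
        filter_upwards [Ioi_mem_nhds hy0] with x hx
        simp [not_le.2 (show 0 < x from hx)]
      have h3 := h2.congr_of_eventuallyEq heq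
      refine h3.congr_deriv ?_
      field_simp
      simp only [Pi.pow_apply]
      ring
    have hcont : ContinuousOn
        (fun x => if x ≤ 0 then (0:ℝ) else ((Real.log lam - Real.log x) ^ 2)⁻¹ / 2)
        (Icc 0 m) := by
      intro x hx
      rcases hx.1.eq_or_lt with h0 | hx0
      · -- x = 0
        subst h0
        have t1 : Tendsto (fun x : ℝ => Real.log lam - Real.log x) (𝓝[>] (0:ℝ)) atTop := by
          have h := Real.tendsto_log_nhdsGT_zero
          have h2 : Tendsto (fun x : ℝ => -Real.log x) (𝓝[>] (0:ℝ)) atTop :=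
            tendsto_neg_atBot_atTop.comp h
          have := tendsto_atTop_add_const_left (𝓝[>] (0:ℝ)) (Real.log lam) h2
          simpa [sub_eq_add_neg] using this
        have key : Tendsto (fun x : ℝ => ((Real.log lam - Real.log x) ^ 2)⁻¹ / 2)
            (𝓝[>] (0:ℝ)) (𝓝 0) := by
          have t2 := (tendsto_pow_atTop (two_ne_zero)).comp t1
          have t3 := tendsto_inv_atTop_zero.comp t2
          have := t3.div_const 2
          simpa using this
        have key2 : Tendsto
            (fun x : ℝ => if x ≤ 0 then (0:ℝ) else ((Real.log lam - Real.log x) ^ 2)⁻¹ / 2)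
            (𝓝[>] (0:ℝ)) (𝓝 0) := by
          apply key.congr'
          filter_upwards [self_mem_nhdsWithin] with x hx
          simp [not_le.2 (mem_Ioi.1 hx)]
        have hsub : Icc (0:ℝ) m ⊆ {0} ∪ Ioi 0 := by
          intro z hz
          rcases hz.1.eq_or_lt with h | h
          · exact Or.inl (by simp [h.symm])
          · exact Or.inr h
        have key3 : Tendsto
            (fun x : ℝ => if x ≤ 0 then (0:ℝ) else ((Real.log lam - Real.log x) ^ 2)⁻¹ / 2)
            (𝓝[({0} ∪ Ioi 0 : Set ℝ)] 0) (𝓝 0) := by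
          rw [nhdsWithin_union]
          apply Filter.Tendsto.sup_sup ?_ key2 |>.mono_right (sup_idem _).le
          rw [nhdsWithin_singleton]
          simpa using tendsto_pure_nhds
            (fun x : ℝ => if x ≤ 0 then (0:ℝ) else ((Real.log lam - Real.log x) ^ 2)⁻¹ / 2) 0
        have : ContinuousWithinAt
            (fun x : ℝ => if x ≤ 0 then (0:ℝ) else ((Real.log lam - Real.log x) ^ 2)⁻¹ / 2)
            (Icc 0 m) 0 := by
          unfold ContinuousWithinAt
          simp only [if_pos le_rfl]
          exact key3.mono_left (nhdsWithin_mono _ hsub)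
        exact this
      · -- 0 < x
        have hu0 : Real.log lam - Real.log x ≠ 0 := by
          have := claimA x hx0 hx.2
          linarith
        have hformula : ContinuousAt (fun x => ((Real.log lam - Real.log x) ^ 2)⁻¹ / 2) x := by
          exact (((continuousAt_const.sub (Real.continuousAt_log hx0.ne')).pow 2).inv₀
            (pow_ne_zero 2 hu0)).div_const 2
        have : ContinuousAt (fun x => if x ≤ 0 then (0:ℝ)
            else ((Real.log lam - Real.log x) ^ 2)⁻¹ / 2) x := by
          apply hformula.congr
          filter_upwards [Ioi_mem_nhds hx0] with z hz
          simp [not_le.2 (show 0 < z from hz)]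
        exact this.continuousWithinAt
    have hpos : ∀ y ∈ Ioo (0:ℝ) m, 0 ≤ (y * (Real.log lam - Real.log y) ^ 3)⁻¹ := by
      intro y hy
      have hu1 : 1 ≤ Real.log lam - Real.log y := claimA y hy.1 hy.2.le
      exact (inv_nonneg).2 (mul_pos hy.1 (pow_pos (by linarith) 3)).le
    have hint : IntegrableOn (fun y => (y * (Real.log lam - Real.log y) ^ 3)⁻¹) (Ioc 0 m) :=
      intervalIntegral.integrableOn_deriv_of_nonneg hcont hderiv hpos
    refine ((hint.mono_set Ioo_subset_Ioc_self).congr_fun ?_ measurableSet_Ioo)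
    intro y hy
    have hu1' : 1 ≤ Real.log lam - Real.log y := claimA y hy.1 hy.2.le
    simp only [Real.log_div hlam.ne' hy.1.ne', max_eq_right hu1']
  refine (hpiece1.union hpiece2).mono_set ?_
  intro y hy
  rcases lt_or_ge y m with h | h
  · exact Or.inl ⟨hy.1, h⟩
  · exact Or.inr ⟨h, hy.2.le⟩

theorem f3_potential_integrable (lam ρ : ℝ) (hlam : 0 < lam) (hρ : 0 < ρ)
    (f₃ : ℝ → ℝ) (hf₃ : ∀ s : ℝ, 0 ≤ s → f₃ ((1 + s) * Real.log (1 + s)) = s ^ 3) :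
    IntegrableOn (fun y => f₃ (lam / ‖y‖))
      {y : EuclideanSpace ℝ (Fin 3) | ‖y‖ < ρ} := by
  have hSval : (fun y : EuclideanSpace ℝ (Fin 3) => f₃ (lam / ‖y‖)) =
      fun y => (Saux (lam / ‖y‖)) ^ 3 := by
    funext y
    have ht : 0 ≤ lam / ‖y‖ := div_nonneg hlam.le (norm_nonneg y)
    obtain ⟨h1, h2⟩ := Saux_spec ht
    conv_lhs => rw [← h2]
    exact hf₃ _ h1
  rw [hSval]
  have hSmeas : Measurable Saux := Saux_mono.measurable
  have hmeas : Measurable fun y : EuclideanSpace ℝ (Fin 3) => (Saux (lam / ‖y‖)) ^ 3 :=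
    (hSmeas.comp (measurable_const.div measurable_norm)).pow_const 3
  have hU : MeasurableSet {y : EuclideanSpace ℝ (Fin 3) | ‖y‖ < ρ} :=
    measurable_norm measurableSet_Iio
  constructor
  · exact hmeas.aestronglyMeasurable
  · rw [hasFiniteIntegral_iff_ofReal
      (Eventually.of_forall fun y => pow_nonneg (Saux_nonneg _) 3)]
    set G : ℝ → ENNReal :=
      (Iio ρ).indicator (fun r => ENNReal.ofReal ((Saux (lam / r)) ^ 3)) with hG
    have hGmeas : Measurable G :=
      (ENNReal.measurable_ofReal.comp
        ((hSmeas.comp (measurable_const.div measurable_id)).pow_const 3)).indicator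
        measurableSet_Iio
    have step1 : ∫⁻ y in {y : EuclideanSpace ℝ (Fin 3) | ‖y‖ < ρ},
        ENNReal.ofReal ((Saux (lam / ‖y‖)) ^ 3) ≤ ∫⁻ y : EuclideanSpace ℝ (Fin 3), G ‖y‖ := by
      rw [← lintegral_indicator hU]
      apply lintegral_mono
      intro y
      by_cases hy : ‖y‖ < ρ
      · rw [Set.indicator_of_mem (show y ∈ {y : EuclideanSpace ℝ (Fin 3) | ‖y‖ < ρ} from hy)]
        exact le_of_eq (Set.indicator_of_mem (show ‖y‖ ∈ Iio ρ from hy)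
          (fun r => ENNReal.ofReal (Saux (lam / r) ^ 3))).symm
      · rw [Set.indicator_of_notMem (show y ∉ _ from hy)]
        exact zero_le
    refine lt_of_le_of_lt step1 ?_
    rw [lintegral_fun_norm_aux G hGmeas]
    refine ENNReal.mul_lt_top (measure_lt_top _ _) ?_
    have step2 : ∫⁻ y in Ioi (0:ℝ), ENNReal.ofReal (y ^ 2) * G y =
        ∫⁻ y in Ioo (0:ℝ) ρ, ENNReal.ofReal (y ^ 2 * (Saux (lam / y)) ^ 3) := by
      have hpt : ∀ y : ℝ, ENNReal.ofReal (y ^ 2) * G y =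
          (Iio ρ).indicator
            (fun y => ENNReal.ofReal (y ^ 2) * ENNReal.ofReal ((Saux (lam / y)) ^ 3)) y := by
        intro y
        by_cases h : y ∈ Iio ρ <;> simp [hG, indicator_of_mem, indicator_of_notMem, h]
      rw [lintegral_congr hpt, lintegral_indicator measurableSet_Iio,
        Measure.restrict_restrict measurableSet_Iio, Set.Iio_inter_Ioi]
      apply setLIntegral_congr_fun measurableSet_Ioo
      intro y hy
      beta_reduce
      rw [ENNReal.ofReal_mul (sq_nonneg y)]
    rw [step2]
    set C : ℝ := ρ ^ 2 * Real.exp 1 ^ 3 with hC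
    have step3 : ∫⁻ y in Ioo (0:ℝ) ρ, ENNReal.ofReal (y ^ 2 * (Saux (lam / y)) ^ 3) ≤
        ∫⁻ y in Ioo (0:ℝ) ρ,
          ENNReal.ofReal (C + 8 * lam ^ 3 * (y * max 1 (Real.log (lam / y)) ^ 3)⁻¹) := by
      apply setLIntegral_mono' measurableSet_Ioo
      intro y hy
      apply ENNReal.ofReal_le_ofReal
      have hy0 : 0 < y := hy.1
      have ht0 : 0 < lam / y := div_pos hlam hy0
      have hS0 : 0 ≤ Saux (lam / y) := Saux_nonneg _
      have hinv0 : 0 ≤ (y * max 1 (Real.log (lam / y)) ^ 3)⁻¹ :=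
        inv_nonneg.2 (mul_nonneg hy0.le
          (pow_nonneg (le_trans zero_le_one (le_max_left _ _)) 3))
      have hterm0 : 0 ≤ 8 * lam ^ 3 * (y * max 1 (Real.log (lam / y)) ^ 3)⁻¹ :=
        mul_nonneg (by positivity) hinv0
      have hC0 : 0 ≤ C := by positivity
      rcases le_or_gt (lam / y) (Real.exp 1) with hcase | hcase
      · have h1 : Saux (lam / y) ≤ Real.exp 1 := (Saux_le_self ht0.le).trans hcase
        have h2 : Saux (lam / y) ^ 3 ≤ Real.exp 1 ^ 3 := pow_le_pow_left₀ hS0 h1 3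
        have hy2 : y ^ 2 ≤ ρ ^ 2 := pow_le_pow_left₀ hy0.le hy.2.le 2
        have : y ^ 2 * Saux (lam / y) ^ 3 ≤ C :=
          mul_le_mul hy2 h2 (pow_nonneg hS0 3) (by positivity)
        linarith
      · have hlog1 : 1 ≤ Real.log (lam / y) := by
          rw [← Real.log_exp 1]
          exact Real.log_le_log (Real.exp_pos 1) hcase.le
        have hmax : max 1 (Real.log (lam / y)) = Real.log (lam / y) := max_eq_right hlog1
        have hkey : Saux (lam / y) * Real.log (lam / y) ≤ 2 * (lam / y) :=
          Saux_log_le hcase.le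
        have hc : 0 < y * Real.log (lam / y) ^ 3 := mul_pos hy0 (pow_pos (by linarith) 3)
        have main : y ^ 2 * Saux (lam / y) ^ 3 ≤
            8 * lam ^ 3 * (y * Real.log (lam / y) ^ 3)⁻¹ := by
          rw [← div_eq_mul_inv, le_div_iff₀ hc]
          calc y ^ 2 * Saux (lam / y) ^ 3 * (y * Real.log (lam / y) ^ 3)
              = (y * (Saux (lam / y) * Real.log (lam / y))) ^ 3 := by ring
            _ ≤ (y * (2 * (lam / y))) ^ 3 := by
                apply pow_le_pow_left₀
                  (mul_nonneg hy0.le (mul_nonneg hS0 (by linarith)))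
                  (mul_le_mul_of_nonneg_left hkey hy0.le) 3
            _ = 8 * lam ^ 3 := by
                field_simp
                ring
        rw [hmax]
        linarith
    refine lt_of_le_of_lt step3 ?_
    apply IntegrableOn.setLIntegral_lt_top
    exact (integrableOn_const (by rw [Real.volume_Ioo]; exact ENNReal.ofReal_ne_top)).add
      ((integrable_H lam ρ hlam hρ).const_mul (8 * lam ^ 3))
end
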